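/- For all real y with 1/4 < y < 1, the identity arccos((1 - 3y)/(2 y^{3/2})) = 3 · arctan(√(4y - 1)) holds. -/

import Mathlib

/-- For all real `y` with `1/4 < y < 1`,
`arccos((1 - 3y)/(2 y^{3/2})) = 3 arctan(√(4y - 1))`. -/
theorem arccos_eq_three_arctan (y : ℝ) (h1 : 1 / 4 < y) (h2 : y < 1) :
    Real.arccos ((1 - 3 * y) / (2 * y ^ ((3 : ℝ) / 2))) =
      3 * Real.arctan (Real.sqrt (4 * y - 1)) := by
  have hy0 : 0 < y := by linarith
  have hs0 : (0:ℝ) < 4 * y - 1 := by linarith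
  set s := Real.sqrt (4 * y - 1) with hs
  have hspos : 0 < s := Real.sqrt_pos.mpr hs0
  have hs2 : s ^ 2 = 4 * y - 1 := Real.sq_sqrt hs0.le
  set t := Real.arctan s with ht
  have hsqy : Real.sqrt y > 0 := Real.sqrt_pos.mpr hy0
  have hsqy2 : Real.sqrt y ^ 2 = y := Real.sq_sqrt hy0.le
  -- cos t = 1 / (2 √y)
  have hcos : Real.cos t = 1 / (2 * Real.sqrt y) := by
    rw [ht, Real.cos_arctan, hs2]
    have : 1 + (4 * y - 1) = (2 * Real.sqrt y) ^ 2 := by ring_nf; nlinarith [hsqy2]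
    rw [this, Real.sqrt_sq (by positivity)]
  -- range of t
  have ht0 : 0 < t := by
    have := Real.arctan_strictMono hspos
    rw [Real.arctan_zero] at this; exact this
  have htlt : t < Real.pi / 3 := by
    have h3 : s < Real.sqrt 3 := by
      apply Real.sqrt_lt_sqrt hs0.le
      linarith
    calc t = Real.arctan s := ht
      _ < Real.arctan (Real.sqrt 3) := Real.arctan_strictMono h3
      _ = Real.pi / 3 := by
        rw [← Real.tan_pi_div_three, Real.arctan_tan] <;>
          nlinarith [Real.pi_pos]
  -- rpow to sqrt
  have hrpow : y ^ ((3:ℝ)/2) = Real.sqrt y ^ 3 := by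
    rw [← Real.rpow_natCast (Real.sqrt y) 3, Real.sqrt_eq_rpow,
      ← Real.rpow_mul hy0.le]
    norm_num
  have harg : (1 - 3 * y) / (2 * y ^ ((3 : ℝ) / 2)) = Real.cos (3 * t) := by
    rw [Real.cos_three_mul, hcos, hrpow]
    field_simp
    linear_combination 12 * hsqy2
  rw [harg, Real.arccos_cos (by linarith) (by nlinarith [Real.pi_pos])]
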